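/- Let L be a two-dimensional non-Lie (right) Leibniz algebra over a field F. Then L has at most two proper nonzero subalgebras. Consequently, L is not lattice isomorphic to any Lie algebra of dimension greater than one over an infinite field, since such a Lie algebra has more than two proper nonzero subalgebras. -/

import Mathlib

/-- A subalgebra of a Leibniz algebra: a submodule closed under the bracket. -/
def IsSubalg {K : Type*} [Field K] {L : Type*} [AddCommGroup L] [Module K L]
    (b : L →ₗ[K] L →ₗ[K] L) (S : Submodule K L) : Prop :=
  ∀ x ∈ S, ∀ y ∈ S, b x y ∈ S

section aux
variable {K : Type*} [Field K] {L : Type*} [AddCommGroup L] [Module K L]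

lemma aux_top_of_pair (hdim : Module.finrank K L = 2) (S : Submodule K L) {v w : L}
    (hv : v ∈ S) (hw : w ∈ S) (hv0 : v ≠ 0) (hws : w ∉ Submodule.span K {v}) : S = ⊤ := by
  have hfd : FiniteDimensional K L := FiniteDimensional.of_finrank_pos (by omega)
  have hli : LinearIndependent K ![v, w] := by
    rw [LinearIndependent.pair_iff]
    intro s t hst
    rcases eq_or_ne t 0 with ht | ht
    · subst ht
      simp only [smul_zero, zero_smul, add_zero] at hst
      rcases smul_eq_zero.1 hst with h | h
      · exact ⟨h, rfl⟩
      · exact absurd h hv0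
    · exfalso
      apply hws
      have h1 : t • w = (-s) • v := by
        rw [neg_smul]; exact eq_neg_of_add_eq_zero_right hst
      have hw' : w = (-s/t) • v := by
        calc w = t⁻¹ • t • w := by rw [smul_smul, inv_mul_cancel₀ ht, one_smul]
          _ = (-s/t) • v := by rw [h1, smul_smul, div_eq_inv_mul]
      rw [hw']
      exact Submodule.smul_mem _ _ (Submodule.mem_span_singleton_self v)
  have h2 : Module.finrank K ↥(Submodule.span K (Set.range ![v, w])) = 2 := by
    rw [finrank_span_eq_card hli]; simp
  have hle : Submodule.span K (Set.range ![v, w]) ≤ S := by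
    rw [Submodule.span_le]
    intro z hz
    rcases hz with ⟨i, rfl⟩
    fin_cases i <;> simpa
  exact Submodule.eq_top_of_finrank_eq
    (le_antisymm (Submodule.finrank_le S)
      (by rw [hdim, ← h2]; exact Submodule.finrank_mono hle))

/-- a line is the only proper nonzero submodule containing a nonzero point of it -/
lemma aux_eq_line (hdim : Module.finrank K L = 2) (S : Submodule K L) {v : L}
    (hv : v ∈ S) (hv0 : v ≠ 0) (hS : S ≠ ⊤) : S = Submodule.span K {v} := by
  refine le_antisymm ?_ ((Submodule.span_singleton_le_iff_mem v S).2 hv)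
  intro w hw
  by_contra hws
  exact hS (aux_top_of_pair hdim S hv hw hv0 hws)

end aux

def lineLieSubalg (F : Type) (M : Type) [Field F] [LieRing M] [LieAlgebra F M] (v : M) :
    LieSubalgebra F M where
  __ := Submodule.span F {v}
  lie_mem' := by
    intro x y hx hy
    rcases Submodule.mem_span_singleton.1 hx with ⟨a, rfl⟩
    rcases Submodule.mem_span_singleton.1 hy with ⟨c, rfl⟩
    show ⁅a • v, c • v⁆ ∈ Submodule.span F {v}
    rw [smul_lie, lie_smul, lie_self, smul_zero, smul_zero]
    exact Submodule.zero_mem _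

lemma lineLieSubalg_toSubmodule (F : Type) (M : Type) [Field F] [LieRing M] [LieAlgebra F M]
    (v : M) : (lineLieSubalg F M v).toSubmodule = Submodule.span F {v} := rfl

lemma aux_infinite_lie (F : Type) (M : Type) [Field F] [Infinite F] [LieRing M]
    [LieAlgebra F M] [Module.Finite F M] (hM : 1 < Module.finrank F M) :
    Infinite (LieSubalgebra F M) := by
  set n := Module.finrank F M with hn
  let B : Module.Basis (Fin n) F M := Module.finBasis F M
  have hi : (⟨0, by omega⟩ : Fin n) ≠ ⟨1, by omega⟩ := by
    intro h
    have := congrArg Fin.val h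
    simp at this
  set m₁ := B ⟨0, by omega⟩
  set m₂ := B ⟨1, by omega⟩
  apply Infinite.of_injective (fun c : F => lineLieSubalg F M (m₁ + c • m₂))
  intro c c' hcc
  have hmem : m₁ + c • m₂ ∈ Submodule.span F {m₁ + c' • m₂} := by
    rw [← lineLieSubalg_toSubmodule]
    simp only at hcc
    rw [← hcc]
    exact Submodule.mem_span_singleton_self _
  rcases Submodule.mem_span_singleton.1 hmem with ⟨a, ha⟩
  have h0 := congrArg (fun z => B.repr z ⟨0, by omega⟩) ha
  have h1 := congrArg (fun z => B.repr z ⟨1, by omega⟩) ha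
  simp [m₁, m₂, Finsupp.single_apply, hi, hi.symm] at h0 h1
  rw [h0, one_mul] at h1
  exact h1.symm


/-- A two-dimensional non-Lie right Leibniz algebra has at most two proper nonzero
subalgebras; consequently it is not lattice isomorphic (no order isomorphism of
subalgebra lattices) to a Lie algebra of dimension `> 1` over an infinite field. -/
theorem two_dim_nonLie_subalgebras {K : Type*} [Field K] {L : Type*}
    [AddCommGroup L] [Module K L] (b : L →ₗ[K] L →ₗ[K] L)
    (hb : ∀ x y z : L, b x (b y z) = b (b x y) z - b (b x z) y)
    (hdim : Module.finrank K L = 2) (hnonLie : ∃ x : L, b x x ≠ 0) :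
    (∃ S₁ S₂ : Submodule K L, ∀ S : Submodule K L,
        IsSubalg b S → S ≠ ⊥ → S ≠ ⊤ → S = S₁ ∨ S = S₂) ∧
    (∀ (F : Type) (M : Type) (_ : Field F) (_ : Infinite F) (_ : LieRing M)
        (_ : LieAlgebra F M) (_ : Module.Finite F M), 1 < Module.finrank F M →
        IsEmpty ({S : Submodule K L // IsSubalg b S} ≃o LieSubalgebra F M)) := by
  obtain ⟨x, hx⟩ := hnonLie
  set e := b x x with he
  -- every square-bracket vanishes on the right
  have hre : ∀ z : L, b z e = 0 := fun z => by rw [he, hb z x x, sub_self]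
  have hbee : b e e = 0 := hre e
  have hbxe : b x e = 0 := hre x
  -- x and e are linearly independent
  have hli : LinearIndependent K ![x, e] := by
    rw [LinearIndependent.pair_iff]
    intro s t hst
    have h1 : b x (s • x + t • e) = s • e := by
      rw [map_add, map_smul, map_smul, hbxe, smul_zero, add_zero]
    rw [hst, map_zero] at h1
    have hs : s = 0 := by
      rcases smul_eq_zero.1 h1.symm with h | h
      · exact h
      · exact absurd h hx
    subst hs
    simp only [zero_smul, zero_add] at hst
    rcases smul_eq_zero.1 hst with h | h
    · exact ⟨rfl, h⟩
    · exact absurd h hx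
  have hcard : Fintype.card (Fin 2) = Module.finrank K L := by simp [hdim]
  let B : Module.Basis (Fin 2) K L := basisOfLinearIndependentOfCardEqFinrank hli hcard
  have hB : ∀ i, B i = ![x, e] i := fun i => by
    rw [show (B : Fin 2 → L) = ![x, e] from coe_basisOfLinearIndependentOfCardEqFinrank hli hcard]
  have hB0 : B 0 = x := hB 0
  have hB1 : B 1 = e := hB 1
  have hrepr : ∀ v : L, v = B.repr v 0 • x + B.repr v 1 • e := by
    intro v
    conv_lhs => rw [← B.sum_repr v]
    rw [Fin.sum_univ_two, hB0, hB1]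
  -- b e x = β • e
  have hzex : ∀ z : L, b z (b e x) = 0 := by
    intro z
    rw [hb z e x, hre z, map_zero, hre (b z x), LinearMap.zero_apply, sub_zero]
  set β := B.repr (b e x) 1 with hβ
  have hbex : b e x = β • e := by
    have h0 : B.repr (b e x) 0 = 0 := by
      have h1 : b x (b e x) = B.repr (b e x) 0 • e := by
        conv_lhs => rw [hrepr (b e x)]
        rw [map_add, map_smul, map_smul, hbxe, smul_zero, add_zero]
      rw [hzex x] at h1
      rcases smul_eq_zero.1 h1.symm with h | h
      · exact h
      · exact absurd h hx
    conv_lhs => rw [hrepr (b e x), h0, zero_smul, zero_add]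
  -- general bracket formula
  have hbr : ∀ s t s' t' : K,
      b (s • x + t • e) (s' • x + t' • e) = ((s * s' + t * (s' * β)) • e) := by
    intro s t s' t'
    simp only [map_add, map_smul, LinearMap.add_apply, LinearMap.smul_apply]
    rw [hbxe, hbee, hbex]
    rw [show b x x = e from rfl]
    simp only [smul_zero, add_zero, smul_add, smul_smul, add_smul]
    module
  have hsq : ∀ v : L, b v v = (B.repr v 0 * (B.repr v 0 + B.repr v 1 * β)) • e := by
    intro v
    conv_lhs => rw [hrepr v]
    rw [hbr]
    ring_nf
  set w := β • x - e with hw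
  have hclass : ∀ S : Submodule K L, IsSubalg b S → S ≠ ⊥ → S ≠ ⊤ →
      S = Submodule.span K {e} ∨ S = Submodule.span K {w} := by
    intro S hSsub hSbot hStop
    obtain ⟨v, hvS, hv0⟩ : ∃ v ∈ S, v ≠ 0 := by
      by_contra h
      push_neg at h
      exact hSbot (le_antisymm (fun z hz => by simpa using h z hz) bot_le)
    set s := B.repr v 0 with hs
    set t := B.repr v 1 with ht
    rcases eq_or_ne s 0 with hs0 | hs0
    · -- v ∈ span e, so S = span e
      left
      have hve : v = t • e := by rw [hrepr v, ← hs, ← ht, hs0, zero_smul, zero_add]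
      have ht0 : t ≠ 0 := fun h => hv0 (by rw [hve, h, zero_smul])
      have heS : e ∈ S := by
        have : e = t⁻¹ • v := by rw [hve, smul_smul, inv_mul_cancel₀ ht0, one_smul]
        rw [this]; exact S.smul_mem _ hvS
      exact aux_eq_line hdim S heS hx hStop
    · -- s ≠ 0
      have hbvv : b v v ∈ S := hSsub v hvS v hvS
      rcases eq_or_ne (s + t * β) 0 with hst | hst
      · -- v is on the line span w
        right
        have hβ0 : β ≠ 0 := by
          intro h
          rw [h, mul_zero, add_zero] at hst
          exact hs0 hst
        have htv : t = -(s / β) := by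
          field_simp
          linear_combination hst
        have hvw : v = (s / β) • w := by
          rw [hw, smul_sub, smul_smul, div_mul_cancel₀ _ hβ0, hrepr v, ← hs, ← ht, htv,
            neg_smul, ← sub_eq_add_neg]
        have hw0 : w ≠ 0 := by
          intro h
          rw [h, smul_zero] at hvw
          exact hv0 hvw
        have hwS : w ∈ S := by
          have : w = (β / s) • v := by
            rw [hvw, smul_smul, div_mul_div_comm, mul_comm, ← div_mul_div_comm,
              div_self hβ0, div_self hs0, one_mul, one_smul]
          rw [this]; exact S.smul_mem _ hvS
        exact aux_eq_line hdim S hwS hw0 hStop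
      · -- e ∈ S and v ∉ span e, contradiction with S ≠ ⊤
        exfalso
        have hc0 : s * (s + t * β) ≠ 0 := mul_ne_zero hs0 hst
        have heS : e ∈ S := by
          have h1 : e = (s * (s + t * β))⁻¹ • b v v := by
            rw [hsq v, ← hs, ← ht, smul_smul, inv_mul_cancel₀ hc0, one_smul]
          rw [h1]; exact S.smul_mem _ hbvv
        apply hStop
        apply aux_top_of_pair hdim S heS hvS hx
        intro hvspan
        rcases Submodule.mem_span_singleton.1 hvspan with ⟨a, hva⟩
        apply hs0
        rw [hs, ← hva, map_smul]
        have h2 : B.repr e 0 = 0 := by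
          rw [← hB1, B.repr_self]
          simp [Finsupp.single_apply]
        simp [h2]
  refine ⟨⟨Submodule.span K {e}, Submodule.span K {w}, hclass⟩, ?_⟩
  intro F M iF iIF iLR iLA iMF hM
  letI := iF; letI := iIF; letI := iLR; letI := iLA; letI := iMF
  refine ⟨fun φ => ?_⟩
  have hsub : {S : Submodule K L | IsSubalg b S} ⊆
      {⊥, ⊤, Submodule.span K {e}, Submodule.span K {w}} := by
    intro S hS
    by_cases h1 : S = ⊥
    · exact Or.inl h1
    by_cases h2 : S = ⊤
    · exact Or.inr (Or.inl h2)
    rcases hclass S hS h1 h2 with h | h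
    · exact Or.inr (Or.inr (Or.inl h))
    · exact Or.inr (Or.inr (Or.inr h))
  have hfinset : ({⊥, ⊤, Submodule.span K {e}, Submodule.span K {w}} :
      Set (Submodule K L)).Finite :=
    (Set.finite_singleton _).insert _ |>.insert _ |>.insert _
  haveI hfin : Finite {S : Submodule K L // IsSubalg b S} :=
    (hfinset.subset hsub).to_subtype
  haveI hinf : Infinite (LieSubalgebra F M) := aux_infinite_lie F M hM
  have : Finite (LieSubalgebra F M) := Finite.of_equiv _ φ.toEquiv
  exact not_finite (LieSubalgebra F M)
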